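/- arXiv:2002.04963 — 3 statements merged into one kernel-verified Lean document; each statement's English description precedes it below -/
import Mathlib

section
/- Let d ≥ 1, let p satisfy 1 < p < 1 + 2/d, let C > 0 and let N > 0 be a real number. Then the infimum, over all measurable functions ρ : ℝ^d → [0,∞) with ∫_{ℝ^d} ρ = N and ∫_{ℝ^d} ρ^{1+2/d} < ∞, of ∫_{ℝ^d} ( C ρ(x)^{1+2/d} − (1/p) ρ(x)^p ) dx equals −N (1 + 2/d − p) (d/(2p)) ( d(p−1)/(2pC) )^{(p−1)/(1 + 2/d − p)}. -/
open MeasureTheory Real Filter Topology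

noncomputable section

/-- Euclidean space `ℝ^d`. -/
abbrev Ed (d : ℕ) : Type := EuclideanSpace ℝ (Fin d)

/-- An admissible `N`-tuple: each component is continuously differentiable,
square-integrable with square-integrable gradient, and the components are
orthonormal in `L²(ℝ^d)`. -/
structure Admissible (d N : ℕ) (u : Fin N → Ed d → ℂ) : Prop where
  contDiff : ∀ n, ContDiff ℝ 1 (u n)
  sqInt : ∀ n, Integrable (fun x : Ed d => ‖u n x‖ ^ 2)
  gradSqInt : ∀ n, Integrable (fun x : Ed d => ‖fderiv ℝ (u n) x‖ ^ 2)
  orthonormal : ∀ j k, ∫ x : Ed d, u j x * (starRingEnd ℂ) (u k x)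
      = if j = k then 1 else 0

/-- The density `ρ_u = ∑ₙ |uₙ|²` of an `N`-tuple. -/
def density (d N : ℕ) (u : Fin N → Ed d → ℂ) (x : Ed d) : ℝ :=
  ∑ n, ‖u n x‖ ^ 2

/-- The NLS energy of an `N`-tuple. -/
def energy (d N : ℕ) (p : ℝ) (u : Fin N → Ed d → ℂ) : ℝ :=
  (∑ n, ∫ x : Ed d, ‖fderiv ℝ (u n) x‖ ^ 2)
    - (1 / p) * ∫ x : Ed d, density d N u x ^ p

/-- `J(N)`: the infimum of the energy over admissible `N`-tuples. -/
def J (d : ℕ) (p : ℝ) (N : ℕ) : ℝ :=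
  sInf { e : ℝ | ∃ u : Fin N → Ed d → ℂ, Admissible d N u ∧ e = energy d N p u }

/-- The occupation weight: `λ - N + 1` on the last index, `1` otherwise. -/
def wt (N : ℕ) (lam : ℝ) (n : Fin N) : ℝ :=
  if (n : ℕ) = N - 1 then lam - N + 1 else 1

/-- The weighted density `ρ_{u,λ}`. -/
def densityW (d N : ℕ) (lam : ℝ) (u : Fin N → Ed d → ℂ) (x : Ed d) : ℝ :=
  ∑ n, wt N lam n * ‖u n x‖ ^ 2

/-- The weighted kinetic energy `T_λ(u)`. -/
def kineticW (d N : ℕ) (lam : ℝ) (u : Fin N → Ed d → ℂ) : ℝ :=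
  ∑ n, wt N lam n * ∫ x : Ed d, ‖fderiv ℝ (u n) x‖ ^ 2

/-- The weighted energy `E_λ(u)`. -/
def energyW (d N : ℕ) (p lam : ℝ) (u : Fin N → Ed d → ℂ) : ℝ :=
  kineticW d N lam u - (1 / p) * ∫ x : Ed d, densityW d N lam u x ^ p

/-- `J(λ)` for real `λ`: the infimum of the weighted energy over admissible
`⌈λ⌉`-tuples. -/
def Jw (d : ℕ) (p : ℝ) (lam : ℝ) : ℝ :=
  sInf { e : ℝ | ∃ u : Fin ⌈lam⌉₊ → Ed d → ℂ,
    Admissible d ⌈lam⌉₊ u ∧ e = energyW d ⌈lam⌉₊ p lam u }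

/-- The one-function NLS infimum `I(d,p,λ)`. -/
def Infimum1 (d : ℕ) (p lam : ℝ) : ℝ :=
  sInf { e : ℝ | ∃ u : Ed d → ℂ, ContDiff ℝ 1 u ∧
    Integrable (fun x : Ed d => ‖u x‖ ^ 2) ∧
    Integrable (fun x : Ed d => ‖fderiv ℝ u x‖ ^ 2) ∧
    (∫ x : Ed d, ‖u x‖ ^ 2) = lam ∧
    e = (∫ x : Ed d, ‖fderiv ℝ u x‖ ^ 2)
        - (1 / p) * ∫ x : Ed d, ‖u x‖ ^ (2 * p) }

/-- The Laplacian of `f : ℝ^d → ℂ`, as the sum of the second partial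
derivatives in the coordinate directions. -/
def lap (d : ℕ) (f : Ed d → ℂ) (x : Ed d) : ℂ :=
  ∑ i : Fin d,
    fderiv ℝ (fun y => fderiv ℝ f y (EuclideanSpace.single i (1 : ℝ))) x
      (EuclideanSpace.single i (1 : ℝ))

/-- The `q`-spherical average `[f]_q(x)`, computed with respect to the surface
measure on the unit sphere. -/
def sphAvg (d : ℕ) (q : ℝ) (f : Ed d → ℝ) (x : Ed d) : ℝ :=
  (∫ ω : Metric.sphere (0 : Ed d) 1, |f (‖x‖ • (ω : Ed d))| ^ q
      ∂((volume : Measure (Ed d)).toSphere)) ^ (1 / q)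

/-- The surface measure of the unit sphere `S^{d-1} ⊂ ℝ^d`. -/
def omegaSphere (d : ℕ) : ℝ :=
  (((volume : Measure (Ed d)).toSphere) Set.univ).toReal

/-- The Thomas–Fermi constant. -/
def cTF (d : ℕ) : ℝ :=
  (4 * π ^ 2 * d / (d + 2)) * ((d : ℝ) / omegaSphere d) ^ (2 / (d : ℝ))


lemma young_core {s r C p : ℝ} (hs : 0 < s) (hr : 0 < r) (hrs : r < s) (hC : 0 < C)
    (hp : 0 < p) {t : ℝ} (ht : 0 < t) :
    (1 / p) * t ^ r ≤ C * t ^ s + (r / (p * s * C)) ^ (r / (s - r)) * ((s - r) / (p * s)) := by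
  have hsr : 0 < s - r := by linarith
  set P : ℝ := s / r with hP
  set Q : ℝ := s / (s - r) with hQ
  have hP1 : 1 < P := (one_lt_div hr).mpr hrs
  have hP0 : 0 < P := by linarith
  have hQ0 : 0 < Q := div_pos hs hsr
  have hconj : P.HolderConjugate Q := by
    refine ⟨?_, hP0, hQ0⟩
    rw [hP, hQ]
    field_simp
    ring
  set x : ℝ := p * P * C with hx
  have hx0 : 0 < x := by positivity
  set a : ℝ := x ^ P⁻¹ * t ^ r with ha_def
  set b : ℝ := x ^ (-P⁻¹) with hb_def
  have ha : 0 ≤ a := by positivity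
  have hb : 0 ≤ b := by positivity
  have hab : a * b = t ^ r := by
    rw [ha_def, hb_def, mul_comm (x ^ P⁻¹) (t ^ r), mul_assoc, ← Real.rpow_add hx0]
    simp
  have haP : a ^ P / P = p * C * t ^ s := by
    rw [ha_def, Real.mul_rpow (by positivity) (by positivity),
      ← Real.rpow_mul hx0.le, ← Real.rpow_mul ht.le,
      inv_mul_cancel₀ (ne_of_gt hP0), Real.rpow_one]
    have hrP : r * P = s := by rw [hP]; field_simp
    rw [hrP, hx, hP]
    field_simp
  have hbQ : b ^ Q / Q = (r / (p * s * C)) ^ (r / (s - r)) * ((s - r) / s) := by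
    rw [hb_def, ← Real.rpow_mul hx0.le]
    have h1 : -P⁻¹ * Q = -(r / (s - r)) := by
      rw [hP, hQ]; field_simp
    rw [h1, Real.rpow_neg hx0.le, ← Real.inv_rpow hx0.le]
    have h2 : x⁻¹ = r / (p * s * C) := by
      rw [hx, hP]
      rw [mul_inv, mul_inv]
      field_simp
    rw [h2, hQ, div_div_eq_mul_div, mul_div_assoc]
  have hyoung := Real.young_inequality_of_nonneg ha hb hconj
  rw [hab, haP, hbQ] at hyoung
  calc (1 / p) * t ^ r = p⁻¹ * t ^ r := by ring
    _ ≤ p⁻¹ * (p * C * t ^ s + (r / (p * s * C)) ^ (r / (s - r)) * ((s - r) / s)) :=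
        mul_le_mul_of_nonneg_left hyoung (by positivity)
    _ = C * t ^ s + (r / (p * s * C)) ^ (r / (s - r)) * ((s - r) / (p * s)) := by
        field_simp

/-- explicit value of the Lieb–Thirring-type minimisation problem
over densities with prescribed mass. -/
theorem statement4 (d : ℕ) (hd : 1 ≤ d) (p : ℝ) (hp1 : 1 < p)
    (hp2 : p < 1 + 2 / d) (C : ℝ) (hC : 0 < C) (N : ℝ) (hN : 0 < N) :
    sInf { e : ℝ | ∃ ρ : Ed d → ℝ, Measurable ρ ∧ (∀ x, 0 ≤ ρ x) ∧
        Integrable ρ ∧ (∫ x : Ed d, ρ x) = N ∧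
        Integrable (fun x : Ed d => ρ x ^ (1 + 2 / (d : ℝ))) ∧
        e = ∫ x : Ed d, (C * ρ x ^ (1 + 2 / (d : ℝ)) - (1 / p) * ρ x ^ p) }
      = -N * (1 + 2 / d - p) * (d / (2 * p)) *
          ((d * (p - 1)) / (2 * p * C)) ^ ((p - 1) / (1 + 2 / d - p)) := by
  have hd0 : (0 : ℝ) < d := by exact_mod_cast hd
  set s : ℝ := 2 / (d : ℝ) with hs_def
  set r : ℝ := p - 1 with hr_def
  have hs : 0 < s := by positivity
  have hr : 0 < r := by rw [hr_def]; linarith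
  have hrs : r < s := by rw [hr_def, hs_def]; linarith
  have hsr : 0 < s - r := by linarith
  have hp0 : 0 < p := by linarith
  have h1s : 0 < 1 + s := by linarith
  set A : ℝ := r / (p * s * C) with hA_def
  have hA : 0 < A := div_pos hr (by positivity)
  set t0 : ℝ := A ^ (s - r)⁻¹ with ht0_def
  have ht0 : 0 < t0 := Real.rpow_pos_of_pos hA _
  set K : ℝ := A ^ (r / (s - r)) * ((s - r) / (p * s)) with hK_def
  have hK : 0 < K := by
    apply mul_pos (Real.rpow_pos_of_pos hA _) (div_pos hsr (by positivity))
  -- basic rpow identities for t0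
  have ht0sr : t0 ^ (s - r) = A := by
    rw [ht0_def, ← Real.rpow_mul hA.le, inv_mul_cancel₀ hsr.ne', Real.rpow_one]
  have ht0r : t0 ^ r = A ^ (r / (s - r)) := by
    rw [ht0_def, ← Real.rpow_mul hA.le, inv_mul_eq_div]
  have ht0s : t0 ^ s = t0 ^ r * A := by
    rw [← ht0sr, ← Real.rpow_add ht0]
    ring_nf
  -- value of the per-mass energy at t0
  have hCA : C * A - 1 / p = -((s - r) / (p * s)) := by
    rw [hA_def]
    field_simp
    ring
  have hval : C * t0 ^ s - 1 / p * t0 ^ r = -K := by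
    rw [ht0s, hK_def, ← ht0r]
    nlinarith [ht0r, hCA, Real.rpow_pos_of_pos ht0 r]
  -- pointwise lower bound
  have hkey : ∀ t : ℝ, 0 ≤ t → -K * t ≤ C * t ^ (1 + s) - 1 / p * t ^ p := by
    intro t ht
    rcases ht.eq_or_lt with h | h
    · rw [← h, Real.zero_rpow h1s.ne', Real.zero_rpow hp0.ne']
      simp
    · have h1 : t ^ (1 + s) = t * t ^ s := by
        rw [Real.rpow_add h, Real.rpow_one]
      have hpr : p = 1 + r := by rw [hr_def]; ring
      have h2 : t ^ p = t * t ^ r := by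
        rw [hpr, Real.rpow_add h, Real.rpow_one]
      have hy := young_core hs hr hrs hC hp0 h
      have h3 : -K ≤ C * t ^ s - 1 / p * t ^ r := by
        rw [hK_def, hA_def] at *
        linarith
      calc -K * t = t * (-K) := by ring
        _ ≤ t * (C * t ^ s - 1 / p * t ^ r) := mul_le_mul_of_nonneg_left h3 h.le
        _ = C * t ^ (1 + s) - 1 / p * t ^ p := by rw [h1, h2]; ring
  -- the minimiser: an indicator function of a ball of volume N / t0
  set V : ℝ := N / t0 with hV_def
  have hV : 0 < V := div_pos hN ht0
  haveI : Nonempty (Fin d) := Fin.pos_iff_nonempty.mp hd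
  haveI : Nontrivial (Ed d) := inferInstance
  set v1r : ℝ := (volume (Metric.ball (0 : Ed d) 1)).toReal with hv1r_def
  have hv1top : volume (Metric.ball (0 : Ed d) 1) ≠ ⊤ := measure_ball_lt_top.ne
  have hv1r : 0 < v1r := ENNReal.toReal_pos (Metric.measure_ball_pos _ _ one_pos).ne' hv1top
  set rad : ℝ := (V / v1r) ^ ((d : ℝ)⁻¹) with hrad_def
  have hrad0 : 0 ≤ rad := Real.rpow_nonneg (by positivity) _
  set B : Set (Ed d) := Metric.ball (0 : Ed d) rad with hB_def
  have hBmeas : MeasurableSet B := measurableSet_ball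
  have hvolB : volume B = ENNReal.ofReal V := by
    rw [hB_def, MeasureTheory.Measure.addHaar_ball volume 0 hrad0, finrank_euclideanSpace_fin]
    have hradd : rad ^ d = V / v1r := by
      rw [hrad_def, ← Real.rpow_natCast ((V / v1r) ^ ((d : ℝ)⁻¹)) d,
        ← Real.rpow_mul (by positivity), inv_mul_cancel₀ hd0.ne', Real.rpow_one]
    rw [hradd, ← ENNReal.ofReal_toReal hv1top, ← hv1r_def,
      ← ENNReal.ofReal_mul (by positivity)]
    congr 1
    field_simp
  have hvolBne : volume B ≠ ⊤ := by rw [hvolB]; exact ENNReal.ofReal_ne_top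
  set ρ : Ed d → ℝ := B.indicator fun _ => t0 with hρ_def
  have hρmeas : Measurable ρ := measurable_const.indicator hBmeas
  have hρpos : ∀ x, 0 ≤ ρ x := fun x => Set.indicator_nonneg (fun _ _ => ht0.le) x
  have hindconst : ∀ c : ℝ, Integrable (B.indicator fun _ : Ed d => c) := by
    intro c
    rw [integrable_indicator_iff hBmeas]
    exact integrableOn_const hvolBne
  have hρint : Integrable ρ := hindconst t0
  have hintind : ∀ c : ℝ, (∫ x : Ed d, B.indicator (fun _ => c) x) = V * c := by
    intro c
    rw [MeasureTheory.integral_indicator_const c hBmeas, measureReal_def, hvolB,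
      ENNReal.toReal_ofReal hV.le, smul_eq_mul]
  have hρN : (∫ x : Ed d, ρ x) = N := by
    rw [hρ_def, hintind t0, hV_def, div_mul_cancel₀ _ ht0.ne']
  have hindpow : ∀ c : ℝ, 0 < c →
      (fun x => ρ x ^ c) = B.indicator fun _ : Ed d => t0 ^ c := by
    intro c hc
    funext x
    by_cases hx : x ∈ B
    · simp [hρ_def, Set.indicator_of_mem hx]
    · simp [hρ_def, Set.indicator_of_notMem hx, Real.zero_rpow hc.ne']
  have hρint1s : Integrable fun x : Ed d => ρ x ^ (1 + s) := by
    rw [hindpow _ h1s]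
    exact hindconst _
  have hρval : (∫ x : Ed d, (C * ρ x ^ (1 + s) - 1 / p * ρ x ^ p)) = -N * K := by
    have heq : (fun x : Ed d => C * ρ x ^ (1 + s) - 1 / p * ρ x ^ p)
        = B.indicator fun _ : Ed d => C * t0 ^ (1 + s) - 1 / p * t0 ^ p := by
      funext x
      by_cases hx : x ∈ B
      · simp [hρ_def, Set.indicator_of_mem hx]
      · simp [hρ_def, Set.indicator_of_notMem hx, Real.zero_rpow h1s.ne',
          Real.zero_rpow hp0.ne']
    rw [heq, hintind]
    have h1 : t0 ^ (1 + s) = t0 * t0 ^ s := by rw [Real.rpow_add ht0, Real.rpow_one]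
    have hpr : p = 1 + r := by rw [hr_def]; ring
    have h2 : t0 ^ p = t0 * t0 ^ r := by rw [hpr, Real.rpow_add ht0, Real.rpow_one]
    have h3 : C * t0 ^ (1 + s) - 1 / p * t0 ^ p = t0 * (C * t0 ^ s - 1 / p * t0 ^ r) := by
      rw [h1, h2]; ring
    rw [h3, hval, hV_def]
    field_simp
  -- the set and its inf
  set S : Set ℝ := { e : ℝ | ∃ ρ : Ed d → ℝ, Measurable ρ ∧ (∀ x, 0 ≤ ρ x) ∧
      Integrable ρ ∧ (∫ x : Ed d, ρ x) = N ∧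
      Integrable (fun x : Ed d => ρ x ^ (1 + s)) ∧
      e = ∫ x : Ed d, (C * ρ x ^ (1 + s) - 1 / p * ρ x ^ p) } with hS_def
  have hmem : -N * K ∈ S := by
    refine ⟨ρ, hρmeas, hρpos, hρint, hρN, hρint1s, ?_⟩
    rw [hρval]
  have hlb : ∀ e ∈ S, -N * K ≤ e := by
    rintro e ⟨σ, hσmeas, hσpos, hσint, hσN, hσint1s, rfl⟩
    -- integrability of σ ^ p
    have hσp_meas : Measurable fun x => σ x ^ p :=
      (Real.continuous_rpow_const hp0.le).measurable.comp hσmeas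
    have hσp_bound : ∀ x, σ x ^ p ≤ σ x + σ x ^ (1 + s) := by
      intro x
      rcases (hσpos x).eq_or_lt with h | h
      · rw [← h, Real.zero_rpow hp0.ne', Real.zero_rpow h1s.ne']
        simp
      · rcases le_or_gt (σ x) 1 with h1 | h1
        · have := Real.rpow_le_rpow_of_exponent_ge h h1 hp1.le
          rw [Real.rpow_one] at this
          have h2 : 0 ≤ σ x ^ (1 + s) := Real.rpow_nonneg (hσpos x) _
          linarith
        · have hps : p ≤ 1 + s := by rw [hs_def]; linarith
          have := Real.rpow_le_rpow_of_exponent_le h1.le hps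
          linarith [hσpos x]
    have hσp_int : Integrable fun x : Ed d => σ x ^ p := by
      refine Integrable.mono' (hσint.add hσint1s) hσp_meas.aestronglyMeasurable
        (Filter.Eventually.of_forall fun x => ?_)
      rw [Real.norm_eq_abs, abs_of_nonneg (Real.rpow_nonneg (hσpos x) _)]
      exact hσp_bound x
    have hint_f : Integrable fun x : Ed d => C * σ x ^ (1 + s) - 1 / p * σ x ^ p :=
      (hσint1s.const_mul C).sub (hσp_int.const_mul (1 / p))
    have hmono : (∫ x : Ed d, -K * σ x)
        ≤ ∫ x : Ed d, (C * σ x ^ (1 + s) - 1 / p * σ x ^ p) := by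
      refine integral_mono (hσint.const_mul (-K)) hint_f fun x => hkey (σ x) (hσpos x)
    rw [integral_const_mul, hσN] at hmono
    linarith
  have hInf : sInf S = -N * K :=
    le_antisymm (csInf_le ⟨-N * K, hlb⟩ hmem) (le_csInf ⟨_, hmem⟩ hlb)
  rw [hInf]
  -- final algebraic identification
  have h1sp : 1 + s - p = s - r := by rw [hr_def]; ring
  have hbase : (d : ℝ) * r / (2 * p * C) = A := by
    rw [hA_def, hs_def]
    field_simp
  rw [h1sp, hbase, hK_def, hs_def]
  field_simp
end
end

section
/- Let d ≥ 1 and 1 < p < 1 + 2/d. Then for every positive integer N the function λ ↦ J(λ) is concave on the open interval (N−1, N). -/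
open MeasureTheory Real Filter Topology

noncomputable section

namespace St10

open MeasureTheory

variable {d N : ℕ} {p : ℝ}

lemma ceil_eq_of_mem (hN : 0 < N) {lam : ℝ}
    (h : lam ∈ Set.Ioo ((N : ℝ) - 1) (N : ℝ)) : ⌈lam⌉₊ = N := by
  rw [Nat.ceil_eq_iff hN.ne']
  refine ⟨?_, h.2.le⟩
  have h1 : ((N - 1 : ℕ) : ℝ) = (N : ℝ) - 1 := by
    rw [Nat.cast_sub hN]; simp
  rw [h1]; exact h.1

/-- The set of achievable weighted energies with `N`-tuples. -/
def ASet (d N : ℕ) (p lam : ℝ) : Set ℝ :=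
  {e : ℝ | ∃ u : Fin N → Ed d → ℂ, Admissible d N u ∧ e = energyW d N p lam u}

lemma Jw_eq (hN : 0 < N) {lam : ℝ} (h : lam ∈ Set.Ioo ((N:ℝ)-1) (N:ℝ)) :
    Jw d p lam = sInf (ASet d N p lam) := by
  have hc : ⌈lam⌉₊ = N := ceil_eq_of_mem hN h
  unfold Jw ASet
  rw [hc]

lemma wt_pos (hN : 0 < N) {lam : ℝ} (h : lam ∈ Set.Ioo ((N:ℝ)-1) (N:ℝ)) (n : Fin N) :
    0 < wt N lam n := by
  have h1 := h.1
  unfold wt; split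
  · linarith
  · norm_num

lemma wt_combo {x y t s : ℝ} (hts : t + s = 1) (n : Fin N) :
    wt N (t*x + s*y) n = t * wt N x n + s * wt N y n := by
  unfold wt; split
  · linear_combination ((N:ℝ) - 1) * hts
  · linarith

lemma wt_le_wt (hN : 0 < N) {x lam : ℝ} (hx : x ∈ Set.Ioo ((N:ℝ)-1) (N:ℝ))
    (hl : lam ∈ Set.Ioo ((N:ℝ)-1) (N:ℝ)) (n : Fin N) :
    wt N lam n ≤ max 1 ((lam - N + 1) / (x - N + 1)) * wt N x n := by
  have hxc : (0:ℝ) < x - N + 1 := by have := hx.1; linarith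
  unfold wt; split
  · calc lam - (N:ℝ) + 1 = ((lam - N + 1)/(x - N + 1)) * (x - N + 1) := by
          field_simp
    _ ≤ max 1 ((lam - N + 1)/(x - N + 1)) * (x - N + 1) :=
        mul_le_mul_of_nonneg_right (le_max_right _ _) hxc.le
  · rw [mul_one]; exact le_max_left _ _

lemma densityW_nonneg (hN : 0 < N) {lam : ℝ} (h : lam ∈ Set.Ioo ((N:ℝ)-1) (N:ℝ))
    (u : Fin N → Ed d → ℂ) (z : Ed d) : 0 ≤ densityW d N lam u z :=
  Finset.sum_nonneg fun n _ => mul_nonneg (wt_pos hN h n).le (by positivity)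

lemma densityW_le (hN : 0 < N) {x lam : ℝ} (hx : x ∈ Set.Ioo ((N:ℝ)-1) (N:ℝ))
    (hl : lam ∈ Set.Ioo ((N:ℝ)-1) (N:ℝ)) (u : Fin N → Ed d → ℂ) (z : Ed d) :
    densityW d N lam u z ≤ max 1 ((lam - N + 1)/(x - N + 1)) * densityW d N x u z := by
  unfold densityW
  rw [Finset.mul_sum]
  refine Finset.sum_le_sum fun n _ => ?_
  rw [← mul_assoc]
  exact mul_le_mul_of_nonneg_right (wt_le_wt hN hx hl n) (by positivity)

lemma densityW_combo {x y t s : ℝ} (hts : t + s = 1) (u : Fin N → Ed d → ℂ) (z : Ed d) :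
    densityW d N (t*x + s*y) u z = t * densityW d N x u z + s * densityW d N y u z := by
  unfold densityW
  rw [Finset.mul_sum, Finset.mul_sum, ← Finset.sum_add_distrib]
  refine Finset.sum_congr rfl fun n _ => ?_
  rw [wt_combo hts]; ring

lemma kineticW_nonneg (hN : 0 < N) {lam : ℝ} (h : lam ∈ Set.Ioo ((N:ℝ)-1) (N:ℝ))
    (u : Fin N → Ed d → ℂ) : 0 ≤ kineticW d N lam u :=
  Finset.sum_nonneg fun n _ => mul_nonneg (wt_pos hN h n).le
    (integral_nonneg fun z => by positivity)

lemma kineticW_le (hN : 0 < N) {x lam : ℝ} (hx : x ∈ Set.Ioo ((N:ℝ)-1) (N:ℝ))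
    (hl : lam ∈ Set.Ioo ((N:ℝ)-1) (N:ℝ)) (u : Fin N → Ed d → ℂ) :
    kineticW d N lam u ≤ max 1 ((lam - N + 1)/(x - N + 1)) * kineticW d N x u := by
  unfold kineticW
  rw [Finset.mul_sum]
  refine Finset.sum_le_sum fun n _ => ?_
  rw [← mul_assoc]
  exact mul_le_mul_of_nonneg_right (wt_le_wt hN hx hl n)
    (integral_nonneg fun z => by positivity)

lemma kineticW_combo {x y t s : ℝ} (hts : t + s = 1) (u : Fin N → Ed d → ℂ) :
    kineticW d N (t*x + s*y) u = t * kineticW d N x u + s * kineticW d N y u := by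
  unfold kineticW
  rw [Finset.mul_sum, Finset.mul_sum, ← Finset.sum_add_distrib]
  refine Finset.sum_congr rfl fun n _ => ?_
  rw [wt_combo hts]; ring

lemma densityW_rpow_continuous (hp0 : 0 < p) {u : Fin N → Ed d → ℂ}
    (hu : ∀ n, ContDiff ℝ 1 (u n)) (lam : ℝ) :
    Continuous fun z : Ed d => densityW d N lam u z ^ p := by
  have h1 : Continuous fun z : Ed d => densityW d N lam u z := by
    unfold densityW
    exact continuous_finset_sum _ fun n _ =>
      continuous_const.mul (((hu n).continuous.norm).pow 2)
  exact h1.rpow_const fun z => Or.inr hp0.le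

lemma intD_transfer (hN : 0 < N) (hp0 : 0 < p) {x lam : ℝ}
    (hx : x ∈ Set.Ioo ((N:ℝ)-1) (N:ℝ)) (hl : lam ∈ Set.Ioo ((N:ℝ)-1) (N:ℝ))
    {u : Fin N → Ed d → ℂ} (hu : Admissible d N u)
    (h : Integrable fun z : Ed d => densityW d N x u z ^ p) :
    Integrable fun z : Ed d => densityW d N lam u z ^ p := by
  set C := max 1 ((lam - (N:ℝ) + 1)/(x - N + 1)) with hC
  have hC0 : (0:ℝ) < C := lt_of_lt_of_le one_pos (le_max_left _ _)
  refine (h.const_mul (C ^ p)).mono'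
    ((densityW_rpow_continuous hp0 hu.contDiff lam).aestronglyMeasurable) ?_
  filter_upwards with z
  rw [Real.norm_eq_abs, abs_of_nonneg (Real.rpow_nonneg (densityW_nonneg hN hl u z) p)]
  calc densityW d N lam u z ^ p ≤ (C * densityW d N x u z) ^ p :=
        Real.rpow_le_rpow (densityW_nonneg hN hl u z) (densityW_le hN hx hl u z) hp0.le
    _ = C ^ p * densityW d N x u z ^ p := Real.mul_rpow hC0.le (densityW_nonneg hN hx u z)

lemma F_le (hN : 0 < N) (hp0 : 0 < p) {x lam : ℝ}
    (hx : x ∈ Set.Ioo ((N:ℝ)-1) (N:ℝ)) (hl : lam ∈ Set.Ioo ((N:ℝ)-1) (N:ℝ))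
    {u : Fin N → Ed d → ℂ} (hu : Admissible d N u)
    (h : Integrable fun z : Ed d => densityW d N x u z ^ p) :
    (∫ z : Ed d, densityW d N lam u z ^ p)
      ≤ max 1 ((lam - (N:ℝ) + 1)/(x - N + 1)) ^ p * ∫ z : Ed d, densityW d N x u z ^ p := by
  set C := max 1 ((lam - (N:ℝ) + 1)/(x - N + 1)) with hC
  have hC0 : (0:ℝ) < C := lt_of_lt_of_le one_pos (le_max_left _ _)
  have h2 := intD_transfer hN hp0 hx hl hu h
  calc (∫ z : Ed d, densityW d N lam u z ^ p)
      ≤ ∫ z : Ed d, C ^ p * densityW d N x u z ^ p := by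
        refine integral_mono h2 (h.const_mul _) fun z => ?_
        calc densityW d N lam u z ^ p ≤ (C * densityW d N x u z) ^ p :=
              Real.rpow_le_rpow (densityW_nonneg hN hl u z) (densityW_le hN hx hl u z) hp0.le
          _ = C ^ p * densityW d N x u z ^ p :=
              Real.mul_rpow hC0.le (densityW_nonneg hN hx u z)
    _ = C ^ p * ∫ z : Ed d, densityW d N x u z ^ p := integral_const_mul _ _

lemma F_convex (hN : 0 < N) (hp1 : 1 < p) {x y t s : ℝ}
    (hx : x ∈ Set.Ioo ((N:ℝ)-1) (N:ℝ)) (hy : y ∈ Set.Ioo ((N:ℝ)-1) (N:ℝ))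
    (hm : t*x + s*y ∈ Set.Ioo ((N:ℝ)-1) (N:ℝ))
    (ht : 0 ≤ t) (hs : 0 ≤ s) (hts : t + s = 1)
    {u : Fin N → Ed d → ℂ} (hu : Admissible d N u) :
    (∫ z : Ed d, densityW d N (t*x+s*y) u z ^ p)
      ≤ t * (∫ z : Ed d, densityW d N x u z ^ p)
        + s * ∫ z : Ed d, densityW d N y u z ^ p := by
  have hp0 : 0 < p := lt_trans one_pos hp1
  by_cases hInt : Integrable fun z : Ed d => densityW d N x u z ^ p
  · have hIy := intD_transfer hN hp0 hx hy hu hInt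
    have hIm := intD_transfer hN hp0 hx hm hu hInt
    have key : ∀ z : Ed d, densityW d N (t*x+s*y) u z ^ p
        ≤ t * densityW d N x u z ^ p + s * densityW d N y u z ^ p := by
      intro z
      rw [densityW_combo hts]
      have h3 := (convexOn_rpow hp1.le).2
        (Set.mem_Ici.mpr (densityW_nonneg hN hx u z))
        (Set.mem_Ici.mpr (densityW_nonneg hN hy u z)) ht hs hts
      simpa [smul_eq_mul] using h3
    calc (∫ z : Ed d, densityW d N (t*x+s*y) u z ^ p)
        ≤ ∫ z : Ed d, (t * densityW d N x u z ^ p + s * densityW d N y u z ^ p) :=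
          integral_mono hIm ((hInt.const_mul t).add (hIy.const_mul s)) key
      _ = _ := by
          rw [integral_add (hInt.const_mul t) (hIy.const_mul s),
            integral_const_mul, integral_const_mul]
  · have hIy : ¬ Integrable fun z : Ed d => densityW d N y u z ^ p :=
      fun h => hInt (intD_transfer hN hp0 hy hx hu h)
    have hIm : ¬ Integrable fun z : Ed d => densityW d N (t*x+s*y) u z ^ p :=
      fun h => hInt (intD_transfer hN hp0 hm hx hu h)
    rw [integral_undef hInt, integral_undef hIy, integral_undef hIm]
    simp

lemma energyW_concave (hN : 0 < N) (hp1 : 1 < p) {x y t s : ℝ}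
    (hx : x ∈ Set.Ioo ((N:ℝ)-1) (N:ℝ)) (hy : y ∈ Set.Ioo ((N:ℝ)-1) (N:ℝ))
    (hm : t*x + s*y ∈ Set.Ioo ((N:ℝ)-1) (N:ℝ))
    (ht : 0 ≤ t) (hs : 0 ≤ s) (hts : t + s = 1)
    {u : Fin N → Ed d → ℂ} (hu : Admissible d N u) :
    t * energyW d N p x u + s * energyW d N p y u ≤ energyW d N p (t*x+s*y) u := by
  have hp0 : 0 < p := lt_trans one_pos hp1
  have hF := F_convex hN hp1 hx hy hm ht hs hts hu
  have hK := kineticW_combo (x := x) (y := y) hts u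
  unfold energyW
  rw [hK]
  have h2 : (1/p) * (∫ z : Ed d, densityW d N (t*x+s*y) u z ^ p)
      ≤ (1/p) * (t * (∫ z : Ed d, densityW d N x u z ^ p)
        + s * ∫ z : Ed d, densityW d N y u z ^ p) :=
    mul_le_mul_of_nonneg_left hF (by positivity)
  nlinarith [h2]

lemma scale_exists (hN : 0 < N) (hp0 : 0 < p) {θ : ℝ} (hθ : 0 < θ)
    {u : Fin N → Ed d → ℂ} (hu : Admissible d N u) :
    ∃ v : Fin N → Ed d → ℂ, Admissible d N v ∧
      ∀ lam ∈ Set.Ioo ((N:ℝ)-1) (N:ℝ),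
        kineticW d N lam v = θ ^ (2:ℝ) * kineticW d N lam u ∧
        (∫ z : Ed d, densityW d N lam v z ^ p)
          = θ ^ ((d:ℝ)*(p-1)) * ∫ z : Ed d, densityW d N lam u z ^ p := by
  set c : ℝ := θ ^ ((d:ℝ)/2) with hcdef
  have hc0 : 0 < c := Real.rpow_pos_of_pos hθ _
  set v : Fin N → Ed d → ℂ := fun n x => c • u n (θ • x) with hv
  have hfr : Module.finrank ℝ (Ed d) = d := finrank_euclideanSpace_fin
  have hθd : (0:ℝ) < θ ^ d := pow_pos hθ d
  have hc2 : c ^ 2 = θ ^ d := by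
    rw [hcdef, ← Real.rpow_natCast (θ ^ ((d:ℝ)/2)) 2, ← Real.rpow_mul hθ.le,
      ← Real.rpow_natCast θ d]
    norm_num
  have hint : ∀ (G : Type) [NormedAddCommGroup G] [NormedSpace ℝ G] (f : Ed d → G),
      (∫ z : Ed d, f (θ • z)) = (θ ^ d)⁻¹ • ∫ z : Ed d, f z := by
    intro G _ _ f
    rw [MeasureTheory.Measure.integral_comp_smul volume f θ, hfr,
      abs_of_pos (inv_pos.mpr hθd)]
  have hud : ∀ n, Differentiable ℝ (u n) := fun n => (hu.contDiff n).differentiable one_ne_zero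
  have hder : ∀ n (x : Ed d),
      HasFDerivAt (v n) ((c * θ) • fderiv ℝ (u n) (θ • x)) x := by
    intro n x
    have h1 : HasFDerivAt (u n) (fderiv ℝ (u n) (θ • x)) (θ • x) :=
      (hud n (θ • x)).hasFDerivAt
    have h2 : HasFDerivAt (fun z : Ed d => θ • z)
        (θ • ContinuousLinearMap.id ℝ (Ed d)) x := (hasFDerivAt_id x).const_smul θ
    have h3 := (h1.comp x h2).const_smul c
    have h4 : c • ((fderiv ℝ (u n) (θ • x)).comp (θ • ContinuousLinearMap.id ℝ (Ed d)))
        = (c * θ) • fderiv ℝ (u n) (θ • x) := by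
      ext z
      simp [mul_smul, _root_.map_smul]
    rw [h4] at h3
    exact h3
  have hfd : ∀ n (x : Ed d), fderiv ℝ (v n) x = (c * θ) • fderiv ℝ (u n) (θ • x) :=
    fun n x => (hder n x).fderiv
  have hnormfd : ∀ n (x : Ed d),
      ‖fderiv ℝ (v n) x‖ ^ 2 = (θ ^ d * θ ^ 2) * ‖fderiv ℝ (u n) (θ • x)‖ ^ 2 := by
    intro n x
    rw [hfd]
    rw [norm_smul (c * θ) (fderiv ℝ (u n) (θ • x))]
    rw [Real.norm_eq_abs, abs_of_pos (mul_pos hc0 hθ), mul_pow, mul_pow, hc2]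
  have hnorm : ∀ n (x : Ed d), ‖v n x‖ ^ 2 = θ ^ d * ‖u n (θ • x)‖ ^ 2 := by
    intro n x
    simp only [hv, norm_smul, Real.norm_eq_abs, abs_of_pos hc0, mul_pow, hc2]
  have hadm : Admissible d N v := by
    constructor
    · intro n
      exact ((hu.contDiff n).comp (contDiff_id.const_smul θ)).const_smul c
    · intro n
      exact (((hu.sqInt n).comp_smul hθ.ne').const_mul (θ ^ d)).congr
        (Filter.Eventually.of_forall fun x => (hnorm n x).symm)
    · intro n
      exact (((hu.gradSqInt n).comp_smul hθ.ne').const_mul (θ ^ d * θ ^ 2)).congr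
        (Filter.Eventually.of_forall fun x => (hnormfd n x).symm)
    · intro j k
      have heq : ∀ x : Ed d, v j x * (starRingEnd ℂ) (v k x)
          = (θ ^ d : ℝ) • ((fun y : Ed d => u j y * (starRingEnd ℂ) (u k y)) (θ • x)) := by
        intro x
        simp only [hv, Complex.real_smul, map_mul, Complex.conj_ofReal]
        rw [← hc2]
        push_cast
        ring
      calc (∫ x : Ed d, v j x * (starRingEnd ℂ) (v k x))
          = ∫ x : Ed d, (θ ^ d : ℝ) • ((fun y : Ed d => u j y * (starRingEnd ℂ) (u k y)) (θ • x)) := by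
            simp only [heq]
        _ = (θ ^ d : ℝ) • ∫ x : Ed d,
              (fun y : Ed d => u j y * (starRingEnd ℂ) (u k y)) (θ • x) := integral_smul _ _
        _ = (θ ^ d : ℝ) • ((θ ^ d)⁻¹ • ∫ y : Ed d, u j y * (starRingEnd ℂ) (u k y)) := by
            rw [hint ℂ (fun y : Ed d => u j y * (starRingEnd ℂ) (u k y))]
        _ = ∫ y : Ed d, u j y * (starRingEnd ℂ) (u k y) := by
            rw [smul_smul, mul_inv_cancel₀ hθd.ne', one_smul]
        _ = if j = k then 1 else 0 := hu.orthonormal j k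
  have hr2 : θ ^ (2:ℝ) = θ ^ 2 := by
    rw [show (2:ℝ) = ((2:ℕ):ℝ) by norm_num, Real.rpow_natCast]
  refine ⟨v, hadm, fun lam hlam => ⟨?_, ?_⟩⟩
  · unfold kineticW
    rw [Finset.mul_sum]
    refine Finset.sum_congr rfl fun n _ => ?_
    have hh : (∫ x : Ed d, ‖fderiv ℝ (v n) x‖ ^ 2)
        = θ ^ 2 * ∫ x : Ed d, ‖fderiv ℝ (u n) x‖ ^ 2 := by
      calc (∫ x : Ed d, ‖fderiv ℝ (v n) x‖ ^ 2)
          = ∫ x : Ed d, (θ ^ d * θ ^ 2) * ((fun y : Ed d => ‖fderiv ℝ (u n) y‖ ^ 2) (θ • x)) := by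
            simp only [hnormfd]
        _ = (θ ^ d * θ ^ 2) * ∫ x : Ed d,
              (fun y : Ed d => ‖fderiv ℝ (u n) y‖ ^ 2) (θ • x) := integral_const_mul _ _
        _ = (θ ^ d * θ ^ 2) * ((θ ^ d)⁻¹ • ∫ y : Ed d, ‖fderiv ℝ (u n) y‖ ^ 2) := by
            rw [hint ℝ (fun y : Ed d => ‖fderiv ℝ (u n) y‖ ^ 2)]
        _ = θ ^ 2 * ∫ y : Ed d, ‖fderiv ℝ (u n) y‖ ^ 2 := by
            rw [smul_eq_mul]
            field_simp
    rw [hh, hr2]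
    ring
  · have hρ : ∀ z : Ed d, densityW d N lam v z = θ ^ d * densityW d N lam u (θ • z) := by
      intro z
      unfold densityW
      rw [Finset.mul_sum]
      refine Finset.sum_congr rfl fun n _ => ?_
      rw [hnorm n z]; ring
    have hρp : ∀ z : Ed d, densityW d N lam v z ^ p
        = (θ ^ d) ^ p * ((fun y : Ed d => densityW d N lam u y ^ p) (θ • z)) := by
      intro z
      rw [hρ z, Real.mul_rpow hθd.le (densityW_nonneg hN hlam u _)]
    have hexp : (θ ^ d) ^ p * (θ ^ d)⁻¹ = θ ^ ((d:ℝ)*(p-1)) := by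
      rw [← Real.rpow_natCast θ d, ← Real.rpow_mul hθ.le, ← Real.rpow_neg hθ.le,
        ← Real.rpow_add hθ]
      congr 1
      ring
    calc (∫ z : Ed d, densityW d N lam v z ^ p)
        = ∫ z : Ed d, (θ ^ d) ^ p * ((fun y : Ed d => densityW d N lam u y ^ p) (θ • z)) := by
          simp only [hρp]
      _ = (θ ^ d) ^ p * ∫ z : Ed d,
            (fun y : Ed d => densityW d N lam u y ^ p) (θ • z) := integral_const_mul _ _
      _ = (θ ^ d) ^ p * ((θ ^ d)⁻¹ • ∫ y : Ed d, densityW d N lam u y ^ p) := by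
          rw [hint ℝ (fun y : Ed d => densityW d N lam u y ^ p)]
      _ = θ ^ ((d:ℝ)*(p-1)) * ∫ y : Ed d, densityW d N lam u y ^ p := by
          rw [smul_eq_mul, ← mul_assoc, hexp]

lemma notBddBelow_transfer (hN : 0 < N) (hd : 1 ≤ d) (hp1 : 1 < p) (hp2 : p < 1 + 2/d)
    {x lam : ℝ} (hx : x ∈ Set.Ioo ((N:ℝ)-1) (N:ℝ)) (hl : lam ∈ Set.Ioo ((N:ℝ)-1) (N:ℝ))
    (h : ¬ BddBelow (ASet d N p x)) : ¬ BddBelow (ASet d N p lam) := by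
  have hp0 : 0 < p := lt_trans one_pos hp1
  have hd0 : (0:ℝ) < d := by exact_mod_cast hd
  have hβ : 0 < 2 - (d:ℝ)*(p-1) := by
    have h2 : p - 1 < 2/(d:ℝ) := by linarith
    have h3 : (d:ℝ)*(p-1) < (d:ℝ)*(2/d) := mul_lt_mul_of_pos_left h2 hd0
    have h4 : (d:ℝ)*(2/(d:ℝ)) = 2 := by field_simp
    linarith
  set κ1 : ℝ := max 1 ((lam - (N:ℝ) + 1)/(x - N + 1)) with hκ1
  set κ2 : ℝ := max 1 ((x - (N:ℝ) + 1)/(lam - N + 1)) with hκ2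
  have hκ1p : (0:ℝ) < κ1 := lt_of_lt_of_le one_pos (le_max_left _ _)
  have hκ2p : (0:ℝ) < κ2 := lt_of_lt_of_le one_pos (le_max_left _ _)
  have hκ2pp : (0:ℝ) < κ2 ^ p := Real.rpow_pos_of_pos hκ2p p
  set r : ℝ := (2 * κ1 * κ2 ^ p)⁻¹ with hr
  have hr0 : 0 < r := by positivity
  set θ0 : ℝ := r ^ (2 - (d:ℝ)*(p-1))⁻¹ with hθ0
  have hθ0p : 0 < θ0 := Real.rpow_pos_of_pos hr0 _
  have hθβ : θ0 ^ (2 - (d:ℝ)*(p-1)) = r := by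
    rw [hθ0, ← Real.rpow_mul hr0.le, inv_mul_cancel₀ hβ.ne', Real.rpow_one]
  have hθα : 0 < θ0 ^ ((d:ℝ)*(p-1)) := Real.rpow_pos_of_pos hθ0p _
  rintro ⟨b, hb⟩
  set M : ℝ := (2 * κ2 ^ p * (|b| + 1)) / θ0 ^ ((d:ℝ)*(p-1)) with hM
  have hM0 : 0 < M := by positivity
  obtain ⟨e, ⟨u, hu, rfl⟩, he⟩ := not_bddBelow_iff.mp h (-M)
  have hKx : 0 ≤ kineticW d N x u := kineticW_nonneg hN hx u
  unfold energyW at he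
  have hFxM : p * M < ∫ z : Ed d, densityW d N x u z ^ p := by
    have h1 : M < (1/p) * ∫ z : Ed d, densityW d N x u z ^ p := by linarith
    calc p * M < p * ((1/p) * ∫ z : Ed d, densityW d N x u z ^ p) :=
          mul_lt_mul_of_pos_left h1 hp0
      _ = ∫ z : Ed d, densityW d N x u z ^ p := by field_simp
  have hFx0 : 0 < ∫ z : Ed d, densityW d N x u z ^ p :=
    lt_trans (mul_pos hp0 hM0) hFxM
  have hKxF : kineticW d N x u ≤ (1/p) * ∫ z : Ed d, densityW d N x u z ^ p := by
    linarith
  have hIntx : Integrable fun z : Ed d => densityW d N x u z ^ p := by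
    by_contra hc
    rw [integral_undef hc] at hFx0
    exact lt_irrefl 0 hFx0
  have hIntl := intD_transfer hN hp0 hx hl hu hIntx
  have hFle : (∫ z : Ed d, densityW d N x u z ^ p)
      ≤ κ2 ^ p * ∫ z : Ed d, densityW d N lam u z ^ p := F_le hN hp0 hl hx hu hIntl
  have hFlam0 : 0 < ∫ z : Ed d, densityW d N lam u z ^ p := by nlinarith
  have hKlam : kineticW d N lam u ≤ κ1 * kineticW d N x u := kineticW_le hN hx hl u
  obtain ⟨v, hadm, hscale⟩ := scale_exists hN hp0 hθ0p hu
  obtain ⟨hKv, hFv⟩ := hscale lam hl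
  have hbv : b ≤ energyW d N p lam v := hb ⟨v, hadm, rfl⟩
  have hEv : energyW d N p lam v
      = θ0 ^ (2:ℝ) * kineticW d N lam u
        - (1/p) * (θ0 ^ ((d:ℝ)*(p-1)) * ∫ z : Ed d, densityW d N lam u z ^ p) := by
    unfold energyW
    rw [hKv, hFv]
  have hsplit : θ0 ^ (2:ℝ) = θ0 ^ ((d:ℝ)*(p-1)) * r := by
    rw [← hθβ, ← Real.rpow_add hθ0p]
    congr 1
    ring
  set T : ℝ := θ0 ^ ((d:ℝ)*(p-1)) with hT
  set Fx : ℝ := ∫ z : Ed d, densityW d N x u z ^ p with hFxd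
  set Fl : ℝ := ∫ z : Ed d, densityW d N lam u z ^ p with hFld
  have hκ1ne : κ1 ≠ 0 := hκ1p.ne'
  have hκ2ne : κ2 ^ p ≠ 0 := hκ2pp.ne'
  have hpne : p ≠ 0 := hp0.ne'
  have hA : T * r * kineticW d N lam u ≤ T * (1/(2*p)) * Fl := by
    have e1 : kineticW d N lam u ≤ κ1 * ((1/p) * (κ2 ^ p * Fl)) := by
      calc kineticW d N lam u ≤ κ1 * kineticW d N x u := hKlam
        _ ≤ κ1 * ((1/p) * Fx) := mul_le_mul_of_nonneg_left hKxF hκ1p.le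
        _ ≤ κ1 * ((1/p) * (κ2 ^ p * Fl)) := by
            refine mul_le_mul_of_nonneg_left (mul_le_mul_of_nonneg_left hFle ?_) hκ1p.le
            positivity
    calc T * r * kineticW d N lam u ≤ T * r * (κ1 * ((1/p) * (κ2 ^ p * Fl))) :=
          mul_le_mul_of_nonneg_left e1 (by positivity)
      _ = T * (1/(2*p)) * Fl := by
          rw [hr]
          field_simp
  have hB : p * M / κ2 ^ p ≤ Fl := by
    rw [div_le_iff₀ hκ2pp]
    calc p * M ≤ κ2 ^ p * Fl := le_trans hFxM.le hFle
      _ = Fl * κ2 ^ p := mul_comm _ _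
  have key : energyW d N p lam v ≤ -(T * M / (2 * κ2 ^ p)) := by
    rw [hEv, hsplit]
    calc T * r * kineticW d N lam u - 1/p * (T * Fl)
        ≤ T * (1/(2*p)) * Fl - 1/p * (T * Fl) := by linarith [hA]
      _ = -(T * Fl / (2*p)) := by ring
      _ ≤ -(T * (p * M / κ2 ^ p) / (2*p)) := by
          have h6 : T * (p * M / κ2 ^ p) ≤ T * Fl := mul_le_mul_of_nonneg_left hB hθα.le
          have h7 : (0:ℝ) < 2*p := by linarith
          exact neg_le_neg ((div_le_div_iff_of_pos_right h7).mpr h6)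
      _ = -(T * M / (2 * κ2 ^ p)) := by
          field_simp
  have hMeq : T * M / (2 * κ2 ^ p) = |b| + 1 := by
    rw [hM]
    have hTne : T ≠ 0 := hθα.ne'
    field_simp
  rw [hMeq] at key
  have := neg_abs_le b
  linarith

end St10


/-- `λ ↦ J(λ)` is concave on each interval `(N−1, N)`. -/
theorem statement10 (d : ℕ) (hd : 1 ≤ d) (p : ℝ) (hp1 : 1 < p)
    (hp2 : p < 1 + 2 / d) :
    ∀ N : ℕ, 0 < N →
      ConcaveOn ℝ (Set.Ioo ((N : ℝ) - 1) (N : ℝ)) (Jw d p) := by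
  intro N hN
  have hp0 : 0 < p := lt_trans one_pos hp1
  constructor
  · exact convex_Ioo _ _
  intro x hx y hy t s ht hs hts
  have hm : t • x + s • y ∈ Set.Ioo ((N:ℝ)-1) (N:ℝ) := (convex_Ioo _ _) hx hy ht hs hts
  simp only [smul_eq_mul] at hm ⊢
  rw [St10.Jw_eq hN hx, St10.Jw_eq hN hy, St10.Jw_eq hN hm]
  by_cases hne : ∃ u : Fin N → Ed d → ℂ, Admissible d N u
  · by_cases hbdd : BddBelow (St10.ASet d N p (t*x+s*y))
    · have hbx : BddBelow (St10.ASet d N p x) := by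
        by_contra hc
        exact (St10.notBddBelow_transfer hN hd hp1 hp2 hx hm hc) hbdd
      have hby : BddBelow (St10.ASet d N p y) := by
        by_contra hc
        exact (St10.notBddBelow_transfer hN hd hp1 hp2 hy hm hc) hbdd
      obtain ⟨u0, hu0⟩ := hne
      refine le_csInf ⟨_, u0, hu0, rfl⟩ ?_
      rintro e ⟨u, hu, rfl⟩
      have h1 : sInf (St10.ASet d N p x) ≤ energyW d N p x u := csInf_le hbx ⟨u, hu, rfl⟩
      have h2 : sInf (St10.ASet d N p y) ≤ energyW d N p y u := csInf_le hby ⟨u, hu, rfl⟩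
      have h3 := St10.energyW_concave hN hp1 hx hy hm ht hs hts hu
      have h4 := mul_le_mul_of_nonneg_left h1 ht
      have h5 := mul_le_mul_of_nonneg_left h2 hs
      linarith
    · have hbx := St10.notBddBelow_transfer hN hd hp1 hp2 hm hx hbdd
      have hby := St10.notBddBelow_transfer hN hd hp1 hp2 hm hy hbdd
      rw [Real.sInf_of_not_bddBelow hbdd, Real.sInf_of_not_bddBelow hbx,
        Real.sInf_of_not_bddBelow hby]
      norm_num
  · have hemp : ∀ lam : ℝ, St10.ASet d N p lam = ∅ := by
      intro lam
      ext e
      simp only [St10.ASet, Set.mem_setOf_eq, Set.mem_empty_iff_false, iff_false]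
      rintro ⟨u, hu, -⟩
      exact hne ⟨u, hu⟩
    rw [hemp, hemp, hemp, Real.sInf_empty]
    norm_num
end
end

section
/- Let d ≥ 1 and let ε, ε' be real numbers with 0 < ε' ≤ ε. Then there exists a constant C > 0, depending only on d, ε and ε', such that for every R ∈ ℝ^d: ∫_{ℝ^d} e^{−ε|x|} e^{−ε'|R−x|} dx ≤ C (1 + |R|^d) e^{−ε'|R|}. -/
open MeasureTheory Real Filter Topology

noncomputable section

lemma poly_le_exp (n : ℕ) {c t : ℝ} (hc : 0 < c) (ht : 0 ≤ t) :
    (1 + t) ^ n ≤ (max 1 ((n:ℝ)/c)) ^ n * Real.exp (c * t) := by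
  rcases Nat.eq_zero_or_pos n with rfl | hn
  · simpa using Real.one_le_exp (by positivity)
  have hnR : (0:ℝ) < n := by exact_mod_cast hn
  set M : ℝ := max 1 ((n:ℝ)/c) with hM
  have hM1 : (1:ℝ) ≤ M := le_max_left _ _
  have hpos : (0:ℝ) ≤ 1 + c/n * t := by positivity
  have h1 : 1 + t ≤ M * (1 + c/n * t) := by
    rcases le_total ((n:ℝ)/c) 1 with h | h
    · have hcn : 1 ≤ c / n := by
        rw [le_div_iff₀ hnR]; rw [div_le_one hc] at h; linarith
      calc 1 + t ≤ 1 + c/n * t := by nlinarith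
        _ ≤ M * (1 + c/n * t) := le_mul_of_one_le_left hpos hM1
    · have hMe : M = (n:ℝ)/c := max_eq_right h
      rw [hMe]
      have heq : (n:ℝ)/c * (1 + c/n * t) = (n:ℝ)/c + t := by field_simp
      rw [heq]; linarith
  have h3 : 1 + c/n * t ≤ Real.exp (c/n * t) := by
    have := Real.add_one_le_exp (c/n * t); linarith
  calc (1 + t) ^ n ≤ (M * (1 + c/n * t)) ^ n := pow_le_pow_left₀ (by linarith) h1 n
    _ = M ^ n * (1 + c/n * t) ^ n := mul_pow _ _ _
    _ ≤ M ^ n * (Real.exp (c/n * t)) ^ n := by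
        apply mul_le_mul_of_nonneg_left (pow_le_pow_left₀ (by positivity) h3 n) (by positivity)
    _ = M ^ n * Real.exp (c * t) := by
        rw [← Real.exp_nat_mul]
        congr 1
        field_simp

lemma exp_dom (n : ℕ) {c t : ℝ} (hc : 0 < c) (ht : 0 ≤ t) :
    Real.exp (-c * t) ≤ (max 1 ((n:ℝ)/c)) ^ n * ((1 + t) ^ n)⁻¹ := by
  have hb : (0:ℝ) < (1 + t) ^ n := by positivity
  rw [← div_eq_mul_inv, le_div_iff₀ hb]
  calc Real.exp (-c * t) * (1 + t) ^ n
      ≤ Real.exp (-c * t) * ((max 1 ((n:ℝ)/c)) ^ n * Real.exp (c * t)) :=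
        mul_le_mul_of_nonneg_left (poly_le_exp n hc ht) (Real.exp_nonneg _)
    _ = (max 1 ((n:ℝ)/c)) ^ n := by
        rw [mul_left_comm, ← Real.exp_add]
        simp

lemma integrable_exp_neg_norm (d : ℕ) {c : ℝ} (hc : 0 < c) :
    Integrable (fun x : Ed d => Real.exp (-c * ‖x‖)) := by
  have hnr : ((Module.finrank ℝ (Ed d)) : ℝ) < ((d + 1 : ℕ) : ℝ) := by
    simp [finrank_euclideanSpace_fin]
  refine ((integrable_one_add_norm (E := Ed d) (μ := volume) hnr).const_mul
    ((max 1 (((d+1:ℕ):ℝ)/c)) ^ (d+1))).mono' ?_ (Filter.Eventually.of_forall fun x => ?_)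
  · apply Measurable.aestronglyMeasurable; fun_prop
  · rw [Real.norm_of_nonneg (Real.exp_nonneg _)]
    calc Real.exp (-c * ‖x‖)
        ≤ (max 1 (((d+1:ℕ):ℝ)/c)) ^ (d+1) * ((1 + ‖x‖) ^ (d+1))⁻¹ :=
          exp_dom (d+1) hc (norm_nonneg x)
      _ = _ := by
        rw [← Real.rpow_natCast (1 + ‖x‖) (d+1), ← Real.rpow_neg (by positivity)]


/-- the convolution-type estimate
`∫ e^{-ε|x|} e^{-ε'|R−x|} dx ≤ C (1 + |R|^d) e^{-ε'|R|}` for `0 < ε' ≤ ε`. -/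
theorem statement17 (d : ℕ) (hd : 1 ≤ d) (eps eps' : ℝ) (heps' : 0 < eps')
    (hle : eps' ≤ eps) :
    ∃ C : ℝ, 0 < C ∧ ∀ R : Ed d,
      (∫ x : Ed d, Real.exp (-eps * ‖x‖) * Real.exp (-eps' * ‖R - x‖))
        ≤ C * (1 + ‖R‖ ^ d) * Real.exp (-eps' * ‖R‖) := by
  have hKint := integrable_exp_neg_norm d heps'
  set K := ∫ x : Ed d, Real.exp (-eps' * ‖x‖) with hKdef
  have hK0 : 0 ≤ K := integral_nonneg fun x => Real.exp_nonneg _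
  set v1 := (volume (Metric.ball (0:Ed d) 1)).toReal with hv1def
  have hv10 : 0 ≤ v1 := ENNReal.toReal_nonneg
  refine ⟨2^d * v1 + K + 1, by positivity, fun R => ?_⟩
  set s := Metric.closedBall (0:Ed d) (2*‖R‖) with hsdef
  have hs : MeasurableSet s := measurableSet_closedBall
  have hsfin : volume s < ⊤ := measure_closedBall_lt_top
  have hind : Integrable (s.indicator (fun _ => (1:ℝ))) := by
    rw [integrable_indicator_iff hs]
    exact integrableOn_const hsfin.ne
  have hg : Integrable (fun x : Ed d => Real.exp (-eps' * ‖R‖) *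
      (s.indicator (fun _ => (1:ℝ)) x + Real.exp (-eps' * ‖x‖))) :=
    (hind.add hKint).const_mul _
  have hpt : ∀ x : Ed d, Real.exp (-eps * ‖x‖) * Real.exp (-eps' * ‖R - x‖)
      ≤ Real.exp (-eps' * ‖R‖) *
        (s.indicator (fun _ => (1:ℝ)) x + Real.exp (-eps' * ‖x‖)) := by
    intro x
    have h0 : Real.exp (-eps * ‖x‖) * Real.exp (-eps' * ‖R - x‖)
        = Real.exp (-eps * ‖x‖ + -eps' * ‖R - x‖) := (Real.exp_add _ _).symm
    have hx0 : (0:ℝ) ≤ ‖x‖ := norm_nonneg x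
    have hRx0 : (0:ℝ) ≤ ‖R - x‖ := norm_nonneg _
    rcases le_or_gt ‖x‖ (2*‖R‖) with hcase | hcase
    · have htri : ‖R‖ ≤ ‖x‖ + ‖R - x‖ := by
        have h : x + (R - x) = R := by abel
        calc ‖R‖ = ‖x + (R - x)‖ := by rw [h]
          _ ≤ ‖x‖ + ‖R - x‖ := norm_add_le _ _
      have hexp : -eps * ‖x‖ + -eps' * ‖R - x‖ ≤ -eps' * ‖R‖ := by
        nlinarith [mul_le_mul_of_nonneg_left htri heps'.le,
          mul_le_mul_of_nonneg_right hle hx0]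
      have hind1 : s.indicator (fun _ => (1:ℝ)) x = 1 := by
        apply Set.indicator_of_mem
        simpa [hsdef, Metric.mem_closedBall, dist_zero_right] using hcase
      rw [h0, hind1]
      calc Real.exp (-eps * ‖x‖ + -eps' * ‖R - x‖)
          ≤ Real.exp (-eps' * ‖R‖) := Real.exp_le_exp.2 hexp
        _ = Real.exp (-eps' * ‖R‖) * 1 := (mul_one _).symm
        _ ≤ _ := by
            apply mul_le_mul_of_nonneg_left _ (Real.exp_nonneg _)
            have := Real.exp_nonneg (-eps' * ‖x‖)
            linarith
    · have htri2 : ‖x‖ - ‖R‖ ≤ ‖R - x‖ := by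
        have h := norm_sub_norm_le x R
        rwa [norm_sub_rev x R] at h
      have hexp : -eps * ‖x‖ + -eps' * ‖R - x‖ ≤ -eps' * ‖R‖ + -eps' * ‖x‖ := by
        nlinarith [mul_le_mul_of_nonneg_left htri2 heps'.le,
          mul_le_mul_of_nonneg_right hle hx0]
      rw [h0]
      calc Real.exp (-eps * ‖x‖ + -eps' * ‖R - x‖)
          ≤ Real.exp (-eps' * ‖R‖ + -eps' * ‖x‖) := Real.exp_le_exp.2 hexp
        _ = Real.exp (-eps' * ‖R‖) * Real.exp (-eps' * ‖x‖) := Real.exp_add _ _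
        _ ≤ _ := by
            apply mul_le_mul_of_nonneg_left _ (Real.exp_nonneg _)
            have := Set.indicator_nonneg (f := fun _ : Ed d => (1:ℝ))
              (fun _ _ => zero_le_one) (s := s) x
            linarith
  have hIle : (∫ x : Ed d, Real.exp (-eps * ‖x‖) * Real.exp (-eps' * ‖R - x‖))
      ≤ ∫ x : Ed d, Real.exp (-eps' * ‖R‖) *
        (s.indicator (fun _ => (1:ℝ)) x + Real.exp (-eps' * ‖x‖)) :=
    integral_mono_of_nonneg
      (Filter.Eventually.of_forall fun x => by positivity) hg
      (Filter.Eventually.of_forall hpt)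
  have hvol : (volume s).toReal = (2*‖R‖)^d * v1 := by
    rw [hsdef, Measure.addHaar_closedBall (volume : Measure (Ed d)) 0 (by positivity : (0:ℝ) ≤ 2*‖R‖),
      ENNReal.toReal_mul, ENNReal.toReal_ofReal (by positivity),
      finrank_euclideanSpace_fin, hv1def]
  have hgval : (∫ x : Ed d, Real.exp (-eps' * ‖R‖) *
      (s.indicator (fun _ => (1:ℝ)) x + Real.exp (-eps' * ‖x‖)))
      = Real.exp (-eps' * ‖R‖) * ((2*‖R‖)^d * v1 + K) := by
    rw [MeasureTheory.integral_const_mul, integral_add hind hKint, integral_indicator_const _ hs,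
      smul_eq_mul, mul_one, measureReal_def, hvol]
  refine le_trans hIle ?_
  rw [hgval]
  have hRn : (0:ℝ) ≤ ‖R‖ ^ d := by positivity
  have h2d : (0:ℝ) ≤ 2 ^ d * v1 := by positivity
  have key : (2*‖R‖)^d * v1 + K ≤ (2^d * v1 + K + 1) * (1 + ‖R‖ ^ d) := by
    rw [mul_pow]
    nlinarith [mul_nonneg h2d hRn]
  calc Real.exp (-eps' * ‖R‖) * ((2*‖R‖)^d * v1 + K)
      ≤ Real.exp (-eps' * ‖R‖) * ((2^d * v1 + K + 1) * (1 + ‖R‖ ^ d)) :=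
        mul_le_mul_of_nonneg_left key (Real.exp_nonneg _)
    _ = (2^d * v1 + K + 1) * (1 + ‖R‖ ^ d) * Real.exp (-eps' * ‖R‖) := by ring
end
end
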